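/- arXiv:math/0504015 — 4 statements merged into one kernel-verified Lean document; each statement's English description precedes it below -/
import Mathlib

section
/- Let P be a field and W = P[x_1,...,x_n] the free commutative polynomial algebra. If μ : W → W is a bijection such that μ∘s = s∘μ for every P-algebra endomorphism s of W, then there exist a, b ∈ P with a ≠ 0 such that μ(u) = a·u + b for all u ∈ W. -/
open MvPolynomial

theorem stmt_0 {P : Type} [Field P] {n : ℕ} (hn : 1 ≤ n)
    (μ : MvPolynomial (Fin n) P → MvPolynomial (Fin n) P)
    (hbij : Function.Bijective μ)
    (hcent : ∀ (s : MvPolynomial (Fin n) P →ₐ[P] MvPolynomial (Fin n) P)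
      (u : MvPolynomial (Fin n) P), μ (s u) = s (μ u)) :
    ∃ a b : P, a ≠ 0 ∧ ∀ u, μ u = C a * u + C b := by
  set i0 : Fin n := ⟨0, hn⟩ with hi0
  set f : MvPolynomial (Fin n) P := μ (X i0) with hf
  -- μ u = (substitute all variables by u in f)
  have key : ∀ u : MvPolynomial (Fin n) P, μ u = aeval (fun _ : Fin n => u) f := by
    intro u
    have := hcent (aeval (fun _ : Fin n => u)) (X i0)
    simpa using this
  -- one-variable polynomial g obtained by identifying all variables
  set g : Polynomial P := aeval (fun _ : Fin n => (Polynomial.X : Polynomial P)) f with hg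
  have key2 : ∀ u : MvPolynomial (Fin n) P, μ u = Polynomial.aeval u g := by
    intro u
    rw [key u, hg]
    have hcomp := MvPolynomial.comp_aeval
      (f := fun _ : Fin n => (Polynomial.X : Polynomial P)) (Polynomial.aeval u)
    have := congrArg (fun (φ : MvPolynomial (Fin n) P →ₐ[P] MvPolynomial (Fin n) P) => φ f) hcomp
    simp only [AlgHom.comp_apply] at this
    rw [this]
    simp
  -- surjectivity gives a preimage of X i0
  obtain ⟨u, hu⟩ := hbij.2 (X i0)
  rw [key2] at hu
  -- project to one variable
  set π : MvPolynomial (Fin n) P →ₐ[P] Polynomial P :=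
    aeval (fun j => if j = i0 then (Polynomial.X : Polynomial P) else 0) with hπ
  have hπu : π (Polynomial.aeval u g) = Polynomial.aeval (π u) g :=
    (Polynomial.aeval_algHom_apply π u g).symm
  have hX : π (X i0) = Polynomial.X := by simp [hπ]
  have hcompX : g.comp (π u) = Polynomial.X := by
    rw [Polynomial.comp_eq_aeval, ← hπu, hu, hX]
  have hdeg : g.natDegree * (π u).natDegree = 1 := by
    have := congrArg Polynomial.natDegree hcompX
    rwa [Polynomial.natDegree_comp, Polynomial.natDegree_X] at this
  have hg1 : g.natDegree = 1 := Nat.eq_one_of_mul_eq_one_right hdeg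
  refine ⟨g.coeff 1, g.coeff 0, ?_, ?_⟩
  · have hgne : g ≠ 0 := fun h => by simp [h] at hg1
    have := Polynomial.leadingCoeff_ne_zero.mpr hgne
    rwa [Polynomial.leadingCoeff, hg1] at this
  · intro v
    rw [key2 v, Polynomial.eq_X_add_C_of_natDegree_le_one hg1.le]
    simp [MvPolynomial.algebraMap_eq]
end

section
/- Let P be a field and W = P[x_1,...,x_n]. If μ : W → W is a central bijection (commutes with all P-algebra endomorphisms), then the restriction of μ to each element of W is given by a single polynomial in one variable: there exists r ∈ P[t] with μ(u) = r(u) for all u ∈ W. -/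
open MvPolynomial

theorem stmt_1 {P : Type} [Field P] {n : ℕ} (hn : 1 ≤ n)
    (μ : MvPolynomial (Fin n) P → MvPolynomial (Fin n) P)
    (hbij : Function.Bijective μ)
    (hcent : ∀ (s : MvPolynomial (Fin n) P →ₐ[P] MvPolynomial (Fin n) P)
      (u : MvPolynomial (Fin n) P), μ (s u) = s (μ u)) :
    ∃ r : Polynomial P, ∀ u, μ u = Polynomial.aeval u r := by
  set i0 : Fin n := ⟨0, hn⟩
  -- the map killing all variables except X i0, factored through Polynomial P
  set g : Fin n → Polynomial P := fun j => if j = i0 then Polynomial.X else 0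
  set π : MvPolynomial (Fin n) P →ₐ[P] Polynomial P := MvPolynomial.aeval g
  set ι : Polynomial P →ₐ[P] MvPolynomial (Fin n) P :=
    Polynomial.aeval (MvPolynomial.X i0)
  set s0 : MvPolynomial (Fin n) P →ₐ[P] MvPolynomial (Fin n) P := ι.comp π
  have hs0 : s0 (MvPolynomial.X i0) = MvPolynomial.X i0 := by
    simp [s0, ι, π, g]
  set r : Polynomial P := π (μ (MvPolynomial.X i0))
  have hkey : μ (MvPolynomial.X i0) = Polynomial.aeval (MvPolynomial.X i0) r := by
    have := hcent s0 (MvPolynomial.X i0)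
    rw [hs0] at this
    simpa [s0, r, ι] using this
  refine ⟨r, fun u => ?_⟩
  -- endomorphism sending X i0 to u
  set su : MvPolynomial (Fin n) P →ₐ[P] MvPolynomial (Fin n) P :=
    MvPolynomial.aeval (fun _ => u)
  have hsu : su (MvPolynomial.X i0) = u := by simp [su]
  have := hcent su (MvPolynomial.X i0)
  rw [hsu, hkey] at this
  rw [this, ← Polynomial.aeval_algHom_apply, hsu]
end

section
/- Let P be a field, W = P[x_1,...,x_n], and let u ∈ W be a basic element, i.e., u belongs to some generating set u_1 = u, u_2, ..., u_n such that the P-algebra endomorphism sending x_i ↦ u_i is an automorphism of W. Then the intersection of the kernels of all P-algebra endomorphisms of W that annihilate u equals the ideal generated by u. -/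
open MvPolynomial

theorem stmt_4 {P : Type} [Field P] {n : ℕ} (hn : 0 < n)
    (u : MvPolynomial (Fin n) P)
    (hbasic : ∃ φ : MvPolynomial (Fin n) P ≃ₐ[P] MvPolynomial (Fin n) P,
      φ (X ⟨0, hn⟩) = u) :
    (⨅ (η : MvPolynomial (Fin n) P →ₐ[P] MvPolynomial (Fin n) P)
        (_ : η u = 0), RingHom.ker η.toRingHom) = Ideal.span {u} := by
  obtain ⟨φ, hφ⟩ := hbasic
  set i0 : Fin n := ⟨0, hn⟩ with hi0
  set π : MvPolynomial (Fin n) P →ₐ[P] MvPolynomial (Fin n) P :=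
    aeval (fun i => if i = i0 then 0 else X i) with hπ
  have hπX : π (X i0) = 0 := by simp [hπ]
  have hker : ∀ w, π w = 0 → w ∈ Ideal.span {(X i0 : MvPolynomial (Fin n) P)} := by
    intro w hw
    set I := Ideal.span {(X i0 : MvPolynomial (Fin n) P)} with hI
    let Q := Ideal.Quotient.mkₐ P I
    have hQπ : Q.comp π = Q := by
      apply MvPolynomial.algHom_ext
      intro i
      simp only [AlgHom.comp_apply, hπ, aeval_X]
      by_cases h : i = i0
      · subst h
        simp only [if_pos rfl, map_zero, Q, Ideal.Quotient.mkₐ_eq_mk, eq_comm]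
        exact Ideal.Quotient.eq_zero_iff_mem.mpr
          (Ideal.subset_span (Set.mem_singleton _))
      · simp [h]
    have hQw : Q w = 0 := by
      have := congrArg (fun f => f w) hQπ
      simp only [AlgHom.comp_apply] at this
      rw [← this, hw, map_zero]
    simpa only [Q, Ideal.Quotient.mkₐ_eq_mk, Ideal.Quotient.eq_zero_iff_mem] using hQw
  set η : MvPolynomial (Fin n) P →ₐ[P] MvPolynomial (Fin n) P :=
    φ.toAlgHom.comp (π.comp φ.symm.toAlgHom) with hη
  have hsymm : φ.symm u = X i0 := by rw [← hφ, AlgEquiv.symm_apply_apply]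
  have hηu : η u = 0 := by
    simp [hη, hsymm, hπX]
  apply le_antisymm
  · intro w hw
    simp only [Ideal.mem_iInf] at hw
    have hwη : η w = 0 := hw η hηu
    have hπw : π (φ.symm w) = 0 := by
      have : φ (π (φ.symm w)) = 0 := hwη
      have := congrArg φ.symm this
      simpa using this
    obtain ⟨c, hc⟩ := Ideal.mem_span_singleton'.mp (hker _ hπw)
    refine Ideal.mem_span_singleton'.mpr ⟨φ c, ?_⟩
    have := congrArg φ hc
    simpa [map_mul, hφ] using this
  · refine le_iInf fun η' => le_iInf fun hη' => ?_
    rw [Ideal.span_le]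
    intro x hx
    simp only [Set.mem_singleton_iff] at hx
    subst hx
    exact hη'
end

section
/- Let P be a field and W = P[x_1,...,x_n]. Let μ : W → W be a bijection generating an automorphism τ of End(W) (i.e., s ↦ μsμ⁻¹ is a monoid automorphism of End(W)), with μ(0) = 0, μ(1) = 1 and μ(x_i) = x_i for all i. Then for every α ∈ P, the ideal generated by μ(α·x_1) equals the ideal generated by x_1. -/
open MvPolynomial

/-- Substituting `X i₀ ↦ 0` leaves a polynomial unchanged modulo `X i₀`. -/
lemma aux_X_dvd_sub {P : Type} [CommRing P] {n : ℕ} (i₀ : Fin n)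
    (p : MvPolynomial (Fin n) P) :
    X i₀ ∣ p - aeval (fun j : Fin n => if j = i₀ then 0 else X j) p := by
  set e : MvPolynomial (Fin n) P →ₐ[P] MvPolynomial (Fin n) P :=
    aeval (fun j : Fin n => if j = i₀ then 0 else X j) with he
  induction p using MvPolynomial.induction_on with
  | C a => simp [he]
  | add p q hp hq =>
      have : p + q - e (p + q) = (p - e p) + (q - e q) := by
        rw [map_add]; ring
      rw [this]; exact dvd_add hp hq
  | mul_X p j hp =>
      have hxj : e (X j) = if j = i₀ then 0 else X j := by simp [he]
      have key : p * X j - e (p * X j)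
          = (p - e p) * X j + e p * (X j - e (X j)) := by
        rw [map_mul]; ring
      rw [key]
      refine dvd_add (Dvd.dvd.mul_right hp _) ?_
      by_cases h : j = i₀
      · subst h; rw [hxj]; simp
      · rw [hxj]; simp [h]

lemma aux_X_dvd_iff {P : Type} [CommRing P] {n : ℕ} (i₀ : Fin n)
    (p : MvPolynomial (Fin n) P) :
    X i₀ ∣ p ↔ (aeval (fun j : Fin n => if j = i₀ then 0 else X j) p
      : MvPolynomial (Fin n) P) = 0 := by
  constructor
  · rintro ⟨r, rfl⟩
    rw [map_mul]
    simp
  · intro h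
    have := aux_X_dvd_sub i₀ p
    rwa [h, sub_zero] at this

lemma aux_prime_X {P : Type} [Field P] {n : ℕ} (i₀ : Fin n) :
    Prime (X i₀ : MvPolynomial (Fin n) P) := by
  refine ⟨X_ne_zero i₀, ?_, ?_⟩
  · intro h
    have hd : (X i₀ : MvPolynomial (Fin n) P) ∣ 1 := h.dvd
    rw [aux_X_dvd_iff, map_one] at hd
    exact one_ne_zero hd
  · intro a b hab
    rw [aux_X_dvd_iff, map_mul, mul_eq_zero] at hab
    rcases hab with h | h
    · exact Or.inl ((aux_X_dvd_iff i₀ a).mpr h)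
    · exact Or.inr ((aux_X_dvd_iff i₀ b).mpr h)

theorem stmt_6 {P : Type} [Field P] {n : ℕ} (hn : 0 < n)
    (μ : MvPolynomial (Fin n) P → MvPolynomial (Fin n) P)
    (hbij : Function.Bijective μ) (h0 : μ 0 = 0) (h1 : μ 1 = 1)
    (hx : ∀ i : Fin n, μ (X i) = X i)
    (τ : (MvPolynomial (Fin n) P →ₐ[P] MvPolynomial (Fin n) P) ≃*
         (MvPolynomial (Fin n) P →ₐ[P] MvPolynomial (Fin n) P))
    (hτ : ∀ s u, (τ s) (μ u) = μ (s u))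
    (α : P) (hα : α ≠ 0) :
    Ideal.span {μ (C α * X ⟨0, hn⟩)} = Ideal.span {(X ⟨0, hn⟩ : MvPolynomial (Fin n) P)} := by
  set i₀ : Fin n := ⟨0, hn⟩
  -- the substitution X i₀ ↦ 0
  set e : MvPolynomial (Fin n) P →ₐ[P] MvPolynomial (Fin n) P :=
    aeval (fun j : Fin n => if j = i₀ then 0 else X j) with he
  -- τ fixes e
  have hτe : τ e = e := by
    apply MvPolynomial.algHom_ext
    intro i
    have h := hτ e (X i)
    rw [hx i] at h
    rw [h]
    by_cases hi : i = i₀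
    · subst hi; simp [he, h0]
    · simp [he, hi, hx i]
  -- X i₀ divides μ (C α * X i₀)
  have hdvd : X i₀ ∣ μ (C α * X i₀) := by
    rw [aux_X_dvd_iff]
    show e (μ (C α * X i₀)) = 0
    rw [← hτe, hτ e (C α * X i₀)]
    have : e (C α * X i₀) = 0 := by simp [he]
    rw [this, h0]
  obtain ⟨q, hq⟩ := hdvd
  -- the scaling endomorphisms
  set s : MvPolynomial (Fin n) P →ₐ[P] MvPolynomial (Fin n) P :=
    aeval (fun j : Fin n => C α * X j) with hs
  set s' : MvPolynomial (Fin n) P →ₐ[P] MvPolynomial (Fin n) P :=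
    aeval (fun j : Fin n => C α⁻¹ * X j) with hs'
  have hsX : ∀ i : Fin n, s (X i) = C α * X i := fun i => by simp [hs]
  have hs'X : ∀ i : Fin n, s' (X i) = C α⁻¹ * X i := fun i => by simp [hs']
  have hsC : ∀ a : P, s (C a) = C a := fun a => by
    simp [hs, MvPolynomial.algHom_C]
  have hs'C : ∀ a : P, s' (C a) = C a := fun a => by
    simp [hs', MvPolynomial.algHom_C]
  have hss' : s * s' = 1 := by
    apply MvPolynomial.algHom_ext
    intro i
    show s (s' (X i)) = X i
    rw [hs'X, map_mul, hsC, hsX, ← mul_assoc, ← C_mul, inv_mul_cancel₀ hα, C_1, one_mul]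
  have hs's : s' * s = 1 := by
    apply MvPolynomial.algHom_ext
    intro i
    show s' (s (X i)) = X i
    rw [hsX, map_mul, hs'C, hs'X, ← mul_assoc, ← C_mul, mul_inv_cancel₀ hα, C_1, one_mul]
  set t : MvPolynomial (Fin n) P →ₐ[P] MvPolynomial (Fin n) P := τ s with ht
  set t' : MvPolynomial (Fin n) P →ₐ[P] MvPolynomial (Fin n) P := τ s' with ht'
  have htt' : ∀ w : MvPolynomial (Fin n) P, t (t' w) = w := by
    intro w
    have h : t * t' = 1 := by rw [ht, ht', ← map_mul, hss', map_one]
    exact congrFun (congrArg DFunLike.coe h) w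
  have ht't : ∀ w : MvPolynomial (Fin n) P, t' (t w) = w := by
    intro w
    have h : t' * t = 1 := by rw [ht, ht', ← map_mul, hs's, map_one]
    exact congrFun (congrArg DFunLike.coe h) w
  -- t (X i₀) = μ (C α * X i₀)
  have htX : t (X i₀) = μ (C α * X i₀) := by
    have h := hτ s (X i₀)
    rw [hx i₀, hsX i₀] at h
    exact h
  -- apply t' to the factorization
  have hfact : X i₀ = t' (X i₀) * t' q := by
    have h := ht't (X i₀)
    rw [htX, hq, map_mul] at h
    exact h.symm
  have hirr : Irreducible (X i₀ : MvPolynomial (Fin n) P) := (aux_prime_X i₀).irreducible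
  rcases hirr.isUnit_or_isUnit hfact with hu | hu
  · exfalso
    have hXu : IsUnit (X i₀ : MvPolynomial (Fin n) P) := by
      have h := hu.map t
      rwa [htt'] at h
    exact (aux_prime_X i₀).not_unit hXu
  · have hqu : IsUnit q := by
      have h := hu.map t
      rwa [htt'] at h
    rw [hq, Ideal.span_singleton_mul_right_unit hqu]
end
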